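/- Let p > 3 be a prime and suppose x, y, z are nonzero integers with x^p + y^p + z^p = 0, pairwise coprime, and p divides y. Then p² divides y. -/

import Mathlib

open Finset


private def SS (p : ℕ) (a b : ℤ) : ℤ := ∑ i ∈ range p, a ^ i * (-b) ^ (p - 1 - i)

private lemma SS_mul (p : ℕ) (hodd : Odd p) (a b : ℤ) : SS p a b * (a + b) = a ^ p + b ^ p := by
  have h := geom_sum₂_mul a (-b) p
  rw [sub_neg_eq_add, Odd.neg_pow hodd, sub_neg_eq_add] at h
  exact h

private lemma SS_sub (p : ℕ) (a b : ℤ) : (a + b) ∣ SS p a b - p * a ^ (p - 1) := by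
  have h1 : (p : ℤ) * a ^ (p - 1) = ∑ i ∈ range p, a ^ i * a ^ (p - 1 - i) := by
    rw [Finset.sum_congr rfl (g := fun _ => a ^ (p - 1))
      (fun i hi => by rw [← pow_add]; congr 1; have := Finset.mem_range.mp hi; omega)]
    rw [Finset.sum_const, card_range, nsmul_eq_mul]
  rw [SS, h1, ← Finset.sum_sub_distrib]
  apply Finset.dvd_sum
  intro i _
  rw [← mul_sub]
  apply Dvd.dvd.mul_left
  have h2 := sub_dvd_pow_sub_pow (-b) a (p - 1 - i)
  have h3 : -b - a = -(a + b) := by ring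
  rw [h3, neg_dvd] at h2
  exact h2

private lemma bin2 (x c : ℤ) : ∀ m : ℕ, c ^ 3 ∣ (x - c) ^ (m + 2) * 2 -
    (x ^ (m + 2) * 2 - 2 * ((m : ℤ) + 2) * x ^ (m + 1) * c
      + ((m : ℤ) + 2) * ((m : ℤ) + 1) * x ^ m * c ^ 2) := by
  intro m
  induction m with
  | zero => exact ⟨0, by push_cast; ring⟩
  | succ n ih =>
    obtain ⟨K, hK⟩ := ih
    refine ⟨K * (x - c) - ((n : ℤ) + 2) * ((n : ℤ) + 1) * x ^ n, ?_⟩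
    push_cast
    linear_combination (x - c) * hK

private lemma list_prod_mod (p : ℕ) : ∀ l : List ℕ, (∀ q ∈ l, q ≡ 1 [MOD p]) →
    l.prod ≡ 1 [MOD p] := by
  intro l
  induction l with
  | nil => simp [Nat.ModEq.refl]
  | cons a t ih =>
    intro h
    have ha := h a List.mem_cons_self
    have ht := ih (fun q hq => h q (List.mem_cons_of_mem a hq))
    simpa using ha.mul ht

private lemma int_pm_one (p : ℕ) (t : ℤ) (ht : t ≠ 0)
    (H : ∀ q : ℕ, q.Prime → (q : ℤ) ∣ t → q ≡ 1 [MOD p]) :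
    (p : ℤ) ∣ t - 1 ∨ (p : ℤ) ∣ t + 1 := by
  have hna : t.natAbs ≠ 0 := Int.natAbs_ne_zero.mpr ht
  have hmod : t.natAbs ≡ 1 [MOD p] := by
    rw [← Nat.prod_primeFactorsList hna]
    apply list_prod_mod
    intro q hq
    have hqp := Nat.prime_of_mem_primeFactorsList hq
    have hqd : (q : ℤ) ∣ t := by
      have h1 : (q : ℤ) ∣ (t.natAbs : ℤ) :=
        Int.natCast_dvd_natCast.mpr (Nat.dvd_of_mem_primeFactorsList hq)
      exact h1.trans (Int.natAbs_dvd.mpr dvd_rfl)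
    exact H q hqp hqd
  have hdvd : (p : ℤ) ∣ (t.natAbs : ℤ) - 1 := by
    have h0 := (Nat.modEq_iff_dvd (n := p) (a := t.natAbs) (b := 1)).mp hmod
    rw [show ((t.natAbs : ℤ) - 1) = -(((1 : ℕ) : ℤ) - (t.natAbs : ℤ)) from by push_cast; ring, dvd_neg]
    exact h0
  rcases Int.natAbs_eq t with he | he
  · left; rw [he]; exact hdvd
  · right
    rw [he]
    have : -(t.natAbs : ℤ) + 1 = -((t.natAbs : ℤ) - 1) := by ring
    rw [this, dvd_neg]
    exact hdvd

private lemma not_dvd_both {a b d : ℤ} (hab : IsCoprime a b) (hd : ¬ IsUnit d)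
    (h1 : d ∣ a) (h2 : d ∣ b) : False := hd (hab.isUnit_of_dvd' h1 h2)

private lemma A1 (p : ℕ) (a b : ℤ) (hab : IsCoprime a b)
    (q : ℕ) (hq : q.Prime) (hqS : (q : ℤ) ∣ SS p a b) (hqab : (q : ℤ) ∣ a + b) :
    (q : ℤ) ∣ (p : ℤ) := by
  have h1 := SS_sub p a b
  have h2 : (q : ℤ) ∣ (p : ℤ) * a ^ (p - 1) := by
    have h3 := dvd_sub hqS (hqab.trans h1)
    rwa [sub_sub_cancel] at h3
  have hqQ : Prime (q : ℤ) := Nat.prime_iff_prime_int.mp hq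
  rcases hqQ.dvd_mul.mp h2 with h | h
  · exact h
  · exfalso
    have hqa := hqQ.dvd_of_dvd_pow h
    have hqb : (q : ℤ) ∣ b := (dvd_add_right hqa).mp hqab
    exact not_dvd_both hab hqQ.not_unit hqa hqb

private lemma A2 (p : ℕ) (hp : p.Prime) (hodd : Odd p) (a b : ℤ) (hab : IsCoprime a b)
    (q : ℕ) (hq : q.Prime) (hqS : (q : ℤ) ∣ SS p a b) (hqab : ¬ (q : ℤ) ∣ a + b) :
    q ≡ 1 [MOD p] := by
  haveI : Fact q.Prime := ⟨hq⟩
  haveI : Fact p.Prime := ⟨hp⟩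
  have hqQ : Prime (q : ℤ) := Nat.prime_iff_prime_int.mp hq
  have hSK : ((SS p a b : ℤ) : ZMod q) = 0 := (ZMod.intCast_zmod_eq_zero_iff_dvd _ _).mpr hqS
  have hmul : ((SS p a b : ℤ) : ZMod q) * ((a : ZMod q) + (b : ZMod q))
      = (a : ZMod q) ^ p + (b : ZMod q) ^ p := by
    have h0 := congrArg (fun t : ℤ => (t : ZMod q)) (SS_mul p hodd a b)
    push_cast at h0
    exact h0
  rw [hSK, zero_mul] at hmul
  have hbK : (b : ZMod q) ≠ 0 := by
    intro H
    rw [H, zero_pow hp.ne_zero] at hmul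
    have ha0 : (a : ZMod q) = 0 := by
      have : (a : ZMod q) ^ p = 0 := by linear_combination -hmul
      exact pow_eq_zero_iff hp.ne_zero |>.mp this
    exact not_dvd_both hab hqQ.not_unit
      ((ZMod.intCast_zmod_eq_zero_iff_dvd _ _).mp ha0)
      ((ZMod.intCast_zmod_eq_zero_iff_dvd _ _).mp H)
  have haK : (a : ZMod q) ≠ 0 := by
    intro H
    rw [H, zero_pow hp.ne_zero] at hmul
    have hb0 : (b : ZMod q) = 0 := by
      have : (b : ZMod q) ^ p = 0 := by linear_combination -hmul
      exact pow_eq_zero_iff hp.ne_zero |>.mp this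
    exact hbK hb0
  have hb' : -(b : ZMod q) ≠ 0 := neg_ne_zero.mpr hbK
  have key0 : (a : ZMod q) ^ p = (-(b : ZMod q)) ^ p := by
    rw [Odd.neg_pow hodd]
    linear_combination -hmul
  set u : ZMod q := (a : ZMod q) * (-(b : ZMod q))⁻¹ with hu
  have hu1 : u ^ p = 1 := by
    rw [hu, mul_pow, inv_pow, key0, mul_inv_cancel₀ (pow_ne_zero _ hb')]
  have hune : u ≠ 1 := by
    intro H
    rw [hu, mul_inv_eq_one₀ hb'] at H
    apply hqab
    rw [← ZMod.intCast_zmod_eq_zero_iff_dvd]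
    push_cast
    rw [H]
    ring
  have hord : orderOf u = p := orderOf_eq_prime hu1 hune
  have hu0 : u ≠ 0 := mul_ne_zero haK (inv_ne_zero hb')
  have hcard : u ^ (q - 1) = 1 := ZMod.pow_card_sub_one_eq_one hu0
  have hdvd : p ∣ q - 1 := hord ▸ orderOf_dvd_of_pow_eq_one hcard
  exact ((Nat.modEq_iff_dvd' hq.one_lt.le).mpr hdvd).symm

private lemma key (p : ℕ) (hp : p.Prime) (hp3 : 3 < p) (a b c : ℤ)
    (hab : IsCoprime a b) (hc0 : c ≠ 0)
    (h : a ^ p + b ^ p + c ^ p = 0) (hpc : ¬ (p : ℤ) ∣ c) :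
    (p : ℤ) ^ 2 ∣ a + b + c ^ p := by
  haveI : Fact p.Prime := ⟨hp⟩
  have hodd : Odd p := hp.odd_of_ne_two (by omega)
  have hS := SS_mul p hodd a b
  have habp : a ^ p + b ^ p = -c ^ p := by linear_combination h
  have hcpne : (-c ^ p : ℤ) ≠ 0 := neg_ne_zero.mpr (pow_ne_zero _ hc0)
  have hSab : SS p a b * (a + b) = -c ^ p := by rw [hS, habp]
  have habne : a + b ≠ 0 := by
    intro H; rw [H, mul_zero] at hSab; exact hcpne hSab.symm
  have hSne : SS p a b ≠ 0 := by
    intro H; rw [H, zero_mul] at hSab; exact hcpne hSab.symm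
  -- p does not divide a + b
  have hpab : ¬ (p : ℤ) ∣ a + b := by
    intro hd
    apply hpc
    rw [← ZMod.intCast_zmod_eq_zero_iff_dvd] at hd ⊢
    have h3 : ((a : ZMod p)) ^ p + ((b : ZMod p)) ^ p + ((c : ZMod p)) ^ p = 0 := by
      have h4 := congrArg (fun t : ℤ => (t : ZMod p)) h
      push_cast at h4
      exact h4
    rw [ZMod.pow_card, ZMod.pow_card, ZMod.pow_card] at h3
    push_cast at hd
    linear_combination h3 - hd
  -- S ≡ 1 mod p
  have hS1 : ((SS p a b : ℤ) : ZMod p) = 1 := by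
    have hab0 : ((a : ZMod p) + (b : ZMod p)) ≠ 0 := by
      intro H
      apply hpab
      rw [← ZMod.intCast_zmod_eq_zero_iff_dvd]
      push_cast
      exact H
    have h4 := congrArg (fun t : ℤ => (t : ZMod p)) hS
    push_cast at h4
    rw [ZMod.pow_card, ZMod.pow_card] at h4
    exact mul_right_cancel₀ hab0 (by rw [h4, one_mul])
  have hpS : ¬ (p : ℤ) ∣ SS p a b := by
    intro hd
    rw [← ZMod.intCast_zmod_eq_zero_iff_dvd] at hd
    rw [hS1] at hd
    exact one_ne_zero hd
  -- coprimality of a+b and S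
  have hcop : IsCoprime (SS p a b) (a + b) := by
    rw [Int.isCoprime_iff_gcd_eq_one]
    by_contra hg
    obtain ⟨q, hq, hqd⟩ := Nat.exists_prime_and_dvd hg
    have hq1 : (q : ℤ) ∣ SS p a b := (Int.natCast_dvd_natCast.mpr hqd).trans
      (Int.gcd_dvd_left _ _)
    have hq2 : (q : ℤ) ∣ a + b := (Int.natCast_dvd_natCast.mpr hqd).trans
      (Int.gcd_dvd_right _ _)
    have := A1 p a b hab q hq hq1 hq2
    have hqp : q = p := by
      rcases (Nat.Prime.eq_one_or_self_of_dvd hp q (Int.natCast_dvd_natCast.mp this)) with h1 | h1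
      · exact absurd h1 hq.ne_one
      · exact h1
    rw [hqp] at hq2
    exact hpab hq2
  -- Barlow: S = t ^ p
  obtain ⟨d, hd⟩ := exists_associated_pow_of_mul_eq_pow' hcop
    (show SS p a b * (a + b) = (-c) ^ p by rw [hSab, Odd.neg_pow hodd])
  obtain ⟨t, ht⟩ : ∃ t : ℤ, t ^ p = SS p a b := by
    rcases Int.associated_iff.mp hd with h1 | h1
    · exact ⟨d, h1⟩
    · exact ⟨-d, by rw [Odd.neg_pow hodd, h1, neg_neg]⟩
  have htne : t ≠ 0 := by
    intro H; rw [H, zero_pow hp.ne_zero] at ht; exact hSne ht.symm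
  -- prime divisors of t are 1 mod p
  have hqt : ∀ q : ℕ, q.Prime → (q : ℤ) ∣ t → q ≡ 1 [MOD p] := by
    intro q hq hqd
    have hqS : (q : ℤ) ∣ SS p a b := by
      rw [← ht]; exact hqd.trans (dvd_pow_self t hp.ne_zero)
    by_cases hqab : (q : ℤ) ∣ a + b
    · exfalso
      have := A1 p a b hab q hq hqS hqab
      have hqp : q = p := by
        rcases (Nat.Prime.eq_one_or_self_of_dvd hp q (Int.natCast_dvd_natCast.mp this)) with h1 | h1
        · exact absurd h1 hq.ne_one
        · exact h1
      rw [hqp] at hqS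
      exact hpS hqS
    · exact A2 p hp hodd a b hab q hq hqS hqab
  -- S ≡ 1 mod p²
  have hS2 : (p : ℤ) ^ 2 ∣ SS p a b - 1 := by
    rcases int_pm_one p t htne hqt with he | he
    · have h5 := dvd_sub_pow_of_dvd_sub (show ((p : ℕ) : ℤ) ∣ t - 1 from he) 1
      simp only [pow_one] at h5
      rw [one_pow, ht] at h5
      exact_mod_cast h5
    · exfalso
      have h5 : (p : ℤ) ∣ SS p a b + 1 := by
        have h6 : (p : ℤ) ∣ t + 1 := he
        have h7 : (p : ℤ) ∣ t ^ p - (-1) ^ p := by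
          have h7' := dvd_sub_pow_of_dvd_sub (show ((p : ℕ) : ℤ) ∣ t - (-1) from by
            rw [sub_neg_eq_add]; exact_mod_cast h6) 1
          simp only [pow_one] at h7'
          exact dvd_trans (dvd_pow_self _ (by norm_num : 1 + 1 ≠ 0)) h7'
        rw [Odd.neg_pow hodd, one_pow, sub_neg_eq_add, ht] at h7
        exact h7
      rw [← ZMod.intCast_zmod_eq_zero_iff_dvd] at h5
      push_cast at h5
      rw [hS1] at h5
      have h8 : ((2 : ℤ) : ZMod p) = 0 := by push_cast; linear_combination h5
      rw [ZMod.intCast_zmod_eq_zero_iff_dvd] at h8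
      have := Int.le_of_dvd (by norm_num) h8
      omega
  -- conclude
  have hfin : (SS p a b - 1) * (a + b) = -(a + b + c ^ p) := by
    linear_combination hSab
  have h9 : (p : ℤ) ^ 2 ∣ -(a + b + c ^ p) := hfin ▸ hS2.mul_right _
  rwa [dvd_neg] at h9

private lemma partI (p : ℕ) (hp : p.Prime) (hp5 : 5 ≤ p) (x y z : ℤ)
    (hpx : ¬ (p : ℤ) ∣ x) (hpy : (p : ℤ) ∣ y)
    (hpxz : (p : ℤ) ∣ x + z) (h : x ^ p + y ^ p + z ^ p = 0) :
    (p : ℤ) ^ 2 ∣ x + z := by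
  have hodd : Odd p := hp.odd_of_ne_two (by omega)
  obtain ⟨m, rfl⟩ : ∃ m, p = m + 2 := ⟨p - 2, by omega⟩
  obtain ⟨K, hK⟩ := bin2 x (x + z) m
  have e1 : (x - (x + z)) ^ (m + 2) = -z ^ (m + 2) := by
    rw [show x - (x + z) = -z from by ring, Odd.neg_pow hodd]
  rw [e1] at hK
  have hPprime : Prime ((m + 2 : ℕ) : ℤ) := Nat.prime_iff_prime_int.mp hp
  have hPne : ((m + 2 : ℕ) : ℤ) ≠ 0 := hPprime.ne_zero
  have big : 2 * ((m : ℤ) + 2) * x ^ (m + 1) * (x + z)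
      = -(y ^ (m + 2) * 2) + ((m : ℤ) + 2) * ((m : ℤ) + 1) * x ^ m * (x + z) ^ 2
        + (x + z) ^ 3 * K := by
    linear_combination hK + 2 * h
  have hdvd3 : ((m + 2 : ℕ) : ℤ) ^ 3 ∣ 2 * ((m : ℤ) + 2) * x ^ (m + 1) * (x + z) := by
    rw [big]
    apply dvd_add
    apply dvd_add
    · rw [dvd_neg]
      obtain ⟨w, hw⟩ := hpy
      rw [hw, mul_pow]
      exact ((pow_dvd_pow _ (by omega : 3 ≤ m + 2)).mul_right _).mul_right _
    · have h1 : ((m + 2 : ℕ) : ℤ) ∣ ((m : ℤ) + 2) := by push_cast; exact dvd_rfl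
      have h2 : ((m + 2 : ℕ) : ℤ) ^ 2 ∣ (x + z) ^ 2 := pow_dvd_pow_of_dvd hpxz 2
      calc ((m + 2 : ℕ) : ℤ) ^ 3 = ((m + 2 : ℕ) : ℤ) * ((m + 2 : ℕ) : ℤ) ^ 2 := by ring
        _ ∣ (((m : ℤ) + 2) * ((m : ℤ) + 1) * x ^ m) * (x + z) ^ 2 := by
            exact mul_dvd_mul ((h1.mul_right _).mul_right _) h2
        _ = ((m : ℤ) + 2) * ((m : ℤ) + 1) * x ^ m * (x + z) ^ 2 := by ring
    · exact (pow_dvd_pow_of_dvd hpxz 3).mul_right _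
  -- cancel one factor of p
  have hP2 : ((m + 2 : ℕ) : ℤ) ^ 2 ∣ 2 * (x ^ (m + 1) * (x + z)) := by
    have hre : 2 * ((m : ℤ) + 2) * x ^ (m + 1) * (x + z)
        = ((m + 2 : ℕ) : ℤ) * (2 * (x ^ (m + 1) * (x + z))) := by push_cast; ring
    rw [hre, show ((m + 2 : ℕ) : ℤ) ^ 3 = ((m + 2 : ℕ) : ℤ) * ((m + 2 : ℕ) : ℤ) ^ 2 from by ring]
      at hdvd3
    exact (mul_dvd_mul_iff_left hPne).mp hdvd3
  have hcop2 : IsCoprime (((m + 2 : ℕ) : ℤ) ^ 2) 2 := by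
    apply IsCoprime.pow_left
    rw [hPprime.coprime_iff_not_dvd]
    intro hd
    have := Int.le_of_dvd (by norm_num) hd
    omega
  have hP2' : ((m + 2 : ℕ) : ℤ) ^ 2 ∣ x ^ (m + 1) * (x + z) := hcop2.dvd_of_dvd_mul_left hP2
  have hcopx : IsCoprime (((m + 2 : ℕ) : ℤ) ^ 2) (x ^ (m + 1)) := by
    apply IsCoprime.pow
    rwa [hPprime.coprime_iff_not_dvd]
  exact hcopx.dvd_of_dvd_mul_left hP2'

theorem stmt9 (p : ℕ) (hp : p.Prime) (hp3 : 3 < p)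
    (x y z : ℤ) (hx : x ≠ 0) (hy : y ≠ 0) (hz : z ≠ 0)
    (hxy : IsCoprime x y) (hyz : IsCoprime y z) (hxz : IsCoprime x z)
    (h : x ^ p + y ^ p + z ^ p = 0) (hpy : (p : ℤ) ∣ y) :
    (p : ℤ) ^ 2 ∣ y := by
  haveI : Fact p.Prime := ⟨hp⟩
  have hodd : Odd p := hp.odd_of_ne_two (by omega)
  have hp5 : 5 ≤ p := by
    have h4 : p ≠ 4 := by intro e; rw [e] at hp; norm_num at hp
    omega
  have hPprime : Prime ((p : ℕ) : ℤ) := Nat.prime_iff_prime_int.mp hp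
  have hpx : ¬ (p : ℤ) ∣ x := by
    intro hd
    exact hPprime.not_unit (hxy.isUnit_of_dvd' hd hpy)
  have hpz : ¬ (p : ℤ) ∣ z := by
    intro hd
    exact hPprime.not_unit (hyz.isUnit_of_dvd' hpy hd)
  have hpxz : (p : ℤ) ∣ x + z := by
    rw [← ZMod.intCast_zmod_eq_zero_iff_dvd]
    have h3 : ((x : ZMod p)) ^ p + ((y : ZMod p)) ^ p + ((z : ZMod p)) ^ p = 0 := by
      have h4 := congrArg (fun t : ℤ => (t : ZMod p)) h
      push_cast at h4
      exact h4
    rw [ZMod.pow_card, ZMod.pow_card, ZMod.pow_card] at h3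
    have hy0 : ((y : ℤ) : ZMod p) = 0 := (ZMod.intCast_zmod_eq_zero_iff_dvd _ _).mpr hpy
    push_cast
    linear_combination h3 - hy0
  have k1 : (p : ℤ) ^ 2 ∣ x + y + z ^ p := key p hp hp3 x y z hxy hz h hpz
  have k2 : (p : ℤ) ^ 2 ∣ z + y + x ^ p :=
    key p hp hp3 z y x hyz.symm hx (by linear_combination h) hpx
  have hI : (p : ℤ) ^ 2 ∣ x + z := partI p hp hp5 x y z hpx hpy hpxz h
  have hpow : (p : ℤ) ^ 2 ∣ x ^ p + z ^ p := by
    have h5 := dvd_sub_pow_of_dvd_sub (show ((p : ℕ) : ℤ) ∣ x - (-z) from by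
      rw [sub_neg_eq_add]; exact hpxz) 1
    simp only [pow_one] at h5
    rwa [Odd.neg_pow hodd, sub_neg_eq_add] at h5
  have h2y : (p : ℤ) ^ 2 ∣ 2 * y := by
    have he : 2 * y = (x + y + z ^ p) + (z + y + x ^ p) - (x + z) - (x ^ p + z ^ p) := by ring
    rw [he]
    exact dvd_sub (dvd_sub (dvd_add k1 k2) hI) hpow
  have hcop2 : IsCoprime ((p : ℤ) ^ 2) 2 := by
    apply IsCoprime.pow_left
    rw [hPprime.coprime_iff_not_dvd]
    intro hd
    have := Int.le_of_dvd (by norm_num) hd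
    omega
  exact hcop2.dvd_of_dvd_mul_left h2y
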